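/- Fix 3 < p < 5 and set s_p = 3/2 − 2/(p−1). Let Ũ₁, Ũ₂ : ℝ³ × ℝ → ℝ be measurable functions with finite mixed space–time norms ‖Ũ_j‖_{L^{2p/(1+s_p)}_t L^{2p/(2−s_p)}_x(ℝ×ℝ³)} < ∞ for j = 1, 2. Let (λ_{1,n}, t_{1,n}) and (λ_{2,n}, t_{2,n}) be sequences in (0,∞) × ℝ that are almost orthogonal, i.e. λ_{2,n}/λ_{1,n} + λ_{1,n}/λ_{2,n} + |t_{1,n} − t_{2,n}|/λ_{1,n} → ∞ as n → ∞, and define Ũ_{j,n}(x,t) = λ_{j,n}^{−(3/2−s_p)}·Ũ_j( x/λ_{j,n}, (t−t_{j,n})/λ_{j,n} ). Then ‖Ũ_{1,n}·Ũ_{2,n}‖_{L^{p/(1+s_p)}_t L^{p/(2−s_p)}_x(ℝ×ℝ³)} → 0 as n → ∞. -/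

import Mathlib

open MeasureTheory Filter ENNReal

/-- Mixed space–time norm `‖v‖_{L^a_t L^b_x (ℝ × ℝ³)}`, valued in `ℝ≥0∞`. -/
noncomputable def mixedNorm (a b : ℝ) (v : EuclideanSpace ℝ (Fin 3) × ℝ → ℝ) :
    ℝ≥0∞ :=
  (∫⁻ t : ℝ, (∫⁻ x : EuclideanSpace ℝ (Fin 3),
      ENNReal.ofReal |v (x, t)| ^ b) ^ (a / b)) ^ (1 / a)

section Helpers
open Set

noncomputable abbrev E3 := EuclideanSpace ℝ (Fin 3)

/-- the inner (spatial) integral -/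
noncomputable def inn (b : ℝ) (v : E3 × ℝ → ℝ) (t : ℝ) : ℝ≥0∞ :=
  ∫⁻ x : E3, ENNReal.ofReal |v (x, t)| ^ b

lemma mixedNorm_eq (a b : ℝ) (v : E3 × ℝ → ℝ) :
    mixedNorm a b v = (∫⁻ t : ℝ, inn b v t ^ (a / b)) ^ (1 / a) := rfl

lemma measurable_inn {b : ℝ} {v : E3 × ℝ → ℝ} (hv : Measurable v) :
    Measurable (inn b v) := by
  apply Measurable.lintegral_prod_left
  apply Measurable.pow_const
  exact ENNReal.measurable_ofReal.comp hv.abs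

lemma inn_mono {b : ℝ} {u v : E3 × ℝ → ℝ} (hb : 0 ≤ b) (h : ∀ z, |u z| ≤ |v z|) (t : ℝ) :
    inn b u t ≤ inn b v t := by
  refine lintegral_mono fun x => ?_
  exact ENNReal.rpow_le_rpow (ENNReal.ofReal_le_ofReal (h (x, t))) hb

lemma mixedNorm_mono {a b : ℝ} (ha : 0 ≤ a) (hb : 0 ≤ b) {u v : E3 × ℝ → ℝ}
    (h : ∀ z, |u z| ≤ |v z|) : mixedNorm a b u ≤ mixedNorm a b v := by
  rw [mixedNorm_eq, mixedNorm_eq]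
  refine ENNReal.rpow_le_rpow ?_ (by positivity)
  refine lintegral_mono fun t => ENNReal.rpow_le_rpow (inn_mono hb h t) (by positivity)

lemma add3_rpow_le {r : ℝ} (hr : 0 ≤ r) (x y z : ℝ≥0∞) :
    (x + y + z) ^ r ≤ 3 ^ r * (x ^ r + y ^ r + z ^ r) := by
  set m := max x (max y z) with hm
  have h1 : x + y + z ≤ 3 * m := by
    have hx : x ≤ m := le_max_left _ _
    have hy : y ≤ m := le_trans (le_max_left _ _) (le_max_right _ _)
    have hz : z ≤ m := le_trans (le_max_right _ _) (le_max_right _ _)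
    calc x + y + z ≤ m + m + m := by gcongr
    _ = 3 * m := by ring
  calc (x + y + z) ^ r ≤ (3 * m) ^ r := ENNReal.rpow_le_rpow h1 hr
    _ = 3 ^ r * m ^ r := ENNReal.mul_rpow_of_nonneg _ _ hr
    _ ≤ 3 ^ r * (x ^ r + y ^ r + z ^ r) := by
        gcongr
        rcases max_cases y z with ⟨h, -⟩ | ⟨h, -⟩ <;> rcases max_cases x (max y z) with ⟨h', -⟩ | ⟨h', -⟩ <;>
          rw [hm, h', ] <;> first
          | exact le_add_of_le_of_nonneg (le_add_of_le_of_nonneg le_rfl (zero_le)) (zero_le)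
          | (rw [h]; first
              | exact le_add_of_nonneg_left (zero_le)
              | exact le_add_of_le_of_nonneg (le_add_of_nonneg_left (zero_le)) (zero_le))

lemma mixedNorm_le_add3 {a b : ℝ} (ha : 0 < a) (hb : 0 < b) {v h₁ h₂ h₃ : E3 × ℝ → ℝ}
    (m₁ : Measurable h₁) (m₂ : Measurable h₂) (m₃ : Measurable h₃)
    (hle : ∀ z, |v z| ≤ |h₁ z| + |h₂ z| + |h₃ z|) :
    mixedNorm a b v ≤ (3 : ℝ≥0∞) ^ (1 + 1 / b + 1 / a) *
      (mixedNorm a b h₁ + mixedNorm a b h₂ + mixedNorm a b h₃) := by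
  have hab : (0:ℝ) ≤ a / b := by positivity
  -- step 1 : inner integral
  have step1 : ∀ t, inn b v t ≤ 3 ^ b * (inn b h₁ t + inn b h₂ t + inn b h₃ t) := by
    intro t
    have : inn b v t ≤ ∫⁻ x : E3, 3 ^ b * (ENNReal.ofReal |h₁ (x,t)| ^ b
        + ENNReal.ofReal |h₂ (x,t)| ^ b + ENNReal.ofReal |h₃ (x,t)| ^ b) := by
      refine lintegral_mono fun x => ?_
      calc ENNReal.ofReal |v (x,t)| ^ b
          ≤ (ENNReal.ofReal |h₁ (x,t)| + ENNReal.ofReal |h₂ (x,t)|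
              + ENNReal.ofReal |h₃ (x,t)|) ^ b := by
            refine ENNReal.rpow_le_rpow ?_ hb.le
            rw [← ENNReal.ofReal_add (abs_nonneg _) (abs_nonneg _),
              ← ENNReal.ofReal_add (by positivity) (abs_nonneg _)]
            exact ENNReal.ofReal_le_ofReal (hle (x,t))
        _ ≤ _ := add3_rpow_le hb.le _ _ _
    refine this.trans ?_
    rw [lintegral_const_mul]
    · rw [lintegral_add_left, lintegral_add_left]
      · rfl
      · exact (ENNReal.measurable_ofReal.comp (m₁.comp (measurable_id.prodMk measurable_const)).abs).pow_const _
      · exact ((ENNReal.measurable_ofReal.comp (m₁.comp (measurable_id.prodMk measurable_const)).abs).pow_const _).add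
          ((ENNReal.measurable_ofReal.comp (m₂.comp (measurable_id.prodMk measurable_const)).abs).pow_const _)
    · exact (((ENNReal.measurable_ofReal.comp (m₁.comp (measurable_id.prodMk measurable_const)).abs).pow_const _).add
        ((ENNReal.measurable_ofReal.comp (m₂.comp (measurable_id.prodMk measurable_const)).abs).pow_const _)).add
        ((ENNReal.measurable_ofReal.comp (m₃.comp (measurable_id.prodMk measurable_const)).abs).pow_const _)
  -- step 2 : outer integral
  have step2 : (∫⁻ t, inn b v t ^ (a/b)) ≤
      3 ^ (a + a/b) * ((∫⁻ t, inn b h₁ t ^ (a/b)) + (∫⁻ t, inn b h₂ t ^ (a/b))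
        + (∫⁻ t, inn b h₃ t ^ (a/b))) := by
    have : (∫⁻ t, inn b v t ^ (a/b)) ≤ ∫⁻ t, 3 ^ (a + a/b) *
        (inn b h₁ t ^ (a/b) + inn b h₂ t ^ (a/b) + inn b h₃ t ^ (a/b)) := by
      refine lintegral_mono fun t => ?_
      calc inn b v t ^ (a/b)
          ≤ (3 ^ b * (inn b h₁ t + inn b h₂ t + inn b h₃ t)) ^ (a/b) :=
            ENNReal.rpow_le_rpow (step1 t) hab
        _ = (3:ℝ≥0∞) ^ (b * (a/b)) * (inn b h₁ t + inn b h₂ t + inn b h₃ t) ^ (a/b) := by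
            rw [ENNReal.mul_rpow_of_nonneg _ _ hab, ← ENNReal.rpow_mul]
        _ ≤ (3:ℝ≥0∞) ^ a * (3 ^ (a/b) * (inn b h₁ t ^ (a/b) + inn b h₂ t ^ (a/b)
              + inn b h₃ t ^ (a/b))) := by
            rw [mul_div_cancel₀ _ hb.ne']
            gcongr
            exact add3_rpow_le hab _ _ _
        _ = 3 ^ (a + a/b) * (inn b h₁ t ^ (a/b) + inn b h₂ t ^ (a/b) + inn b h₃ t ^ (a/b)) := by
            rw [← mul_assoc, ← ENNReal.rpow_add _ _ (by norm_num) (by norm_num)]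
    refine this.trans ?_
    rw [lintegral_const_mul]
    · rw [lintegral_add_left, lintegral_add_left]
      · exact ((measurable_inn m₁).pow_const _)
      · exact ((measurable_inn m₁).pow_const _).add ((measurable_inn m₂).pow_const _)
    · exact (((measurable_inn m₁).pow_const _).add ((measurable_inn m₂).pow_const _)).add
        ((measurable_inn m₃).pow_const _)
  -- step 3 : final
  rw [mixedNorm_eq]
  calc (∫⁻ t, inn b v t ^ (a/b)) ^ (1/a)
      ≤ (3 ^ (a + a/b) * ((∫⁻ t, inn b h₁ t ^ (a/b)) + (∫⁻ t, inn b h₂ t ^ (a/b))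
          + (∫⁻ t, inn b h₃ t ^ (a/b)))) ^ (1/a) := ENNReal.rpow_le_rpow step2 (by positivity)
    _ = (3:ℝ≥0∞) ^ ((a + a/b) * (1/a)) * ((∫⁻ t, inn b h₁ t ^ (a/b)) + (∫⁻ t, inn b h₂ t ^ (a/b))
          + (∫⁻ t, inn b h₃ t ^ (a/b))) ^ (1/a) := by
        rw [ENNReal.mul_rpow_of_nonneg _ _ (by positivity : (0:ℝ) ≤ 1/a), ← ENNReal.rpow_mul]
    _ ≤ (3:ℝ≥0∞) ^ ((a + a/b) * (1/a)) * (3 ^ (1/a) *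
          ((∫⁻ t, inn b h₁ t ^ (a/b)) ^ (1/a) + (∫⁻ t, inn b h₂ t ^ (a/b)) ^ (1/a)
            + (∫⁻ t, inn b h₃ t ^ (a/b)) ^ (1/a))) := by
        gcongr
        exact add3_rpow_le (by positivity) _ _ _
    _ = _ := by
        rw [← mul_assoc, ← ENNReal.rpow_add _ _ (by norm_num) (by norm_num)]
        rw [mixedNorm_eq, mixedNorm_eq, mixedNorm_eq]
        congr 2
        field_simp

lemma cauchy_schwarz_lintegral {α : Type*} [MeasurableSpace α] {μ : Measure α}
    {f g : α → ℝ≥0∞} (hf : Measurable f) (hg : Measurable g) :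
    ∫⁻ x, f x * g x ∂μ ≤ (∫⁻ x, f x ^ (2:ℝ) ∂μ) ^ (1/2 : ℝ) * (∫⁻ x, g x ^ (2:ℝ) ∂μ) ^ (1/2 : ℝ) :=
  ENNReal.lintegral_mul_le_Lp_mul_Lq μ Real.HolderConjugate.two_two
    hf.aemeasurable hg.aemeasurable

lemma rpow_two_rpow (x : ℝ≥0∞) (c : ℝ) : (x ^ c) ^ (2:ℝ) = x ^ (2 * c) := by
  rw [← ENNReal.rpow_mul, mul_comm]

lemma mixedNorm_mul_le {a b : ℝ} (ha : 0 < a) (hb : 0 < b) {u v : E3 × ℝ → ℝ}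
    (hu : Measurable u) (hv : Measurable v) :
    mixedNorm a b (fun z => u z * v z) ≤ mixedNorm (2*a) (2*b) u * mixedNorm (2*a) (2*b) v := by
  have hab : (0:ℝ) ≤ a / b := by positivity
  have step1 : ∀ t, inn b (fun z => u z * v z) t ≤
      inn (2*b) u t ^ (1/2 : ℝ) * inn (2*b) v t ^ (1/2 : ℝ) := by
    intro t
    have h1 : inn b (fun z => u z * v z) t
        = ∫⁻ x : E3, (ENNReal.ofReal |u (x,t)| ^ b) * (ENNReal.ofReal |v (x,t)| ^ b) := by
      unfold inn
      congr 1; ext x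
      rw [abs_mul, ENNReal.ofReal_mul (abs_nonneg _), ENNReal.mul_rpow_of_nonneg _ _ hb.le]
    rw [h1]
    refine (cauchy_schwarz_lintegral
      ((ENNReal.measurable_ofReal.comp (hu.comp (measurable_id.prodMk measurable_const)).abs).pow_const _)
      ((ENNReal.measurable_ofReal.comp (hv.comp (measurable_id.prodMk measurable_const)).abs).pow_const _)).trans ?_
    simp_rw [rpow_two_rpow]
    exact le_rfl
  have step2 : (∫⁻ t, inn b (fun z => u z * v z) t ^ (a/b)) ≤
      (∫⁻ t, inn (2*b) u t ^ (a/b)) ^ (1/2:ℝ) * (∫⁻ t, inn (2*b) v t ^ (a/b)) ^ (1/2:ℝ) := by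
    have h1 : (∫⁻ t, inn b (fun z => u z * v z) t ^ (a/b)) ≤
        ∫⁻ t, (inn (2*b) u t ^ ((1/2:ℝ) * (a/b))) * (inn (2*b) v t ^ ((1/2:ℝ) * (a/b))) := by
      refine lintegral_mono fun t => ?_
      calc inn b (fun z => u z * v z) t ^ (a/b)
          ≤ (inn (2*b) u t ^ (1/2:ℝ) * inn (2*b) v t ^ (1/2:ℝ)) ^ (a/b) :=
            ENNReal.rpow_le_rpow (step1 t) hab
        _ = _ := by
            rw [ENNReal.mul_rpow_of_nonneg _ _ hab, ← ENNReal.rpow_mul, ← ENNReal.rpow_mul]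
    refine h1.trans ?_
    refine (cauchy_schwarz_lintegral ((measurable_inn hu).pow_const _)
      ((measurable_inn hv).pow_const _)).trans ?_
    simp_rw [rpow_two_rpow]
    have : 2 * ((1/2:ℝ) * (a / b)) = a / b := by ring
    rw [this]
  have key : ∀ w : E3 × ℝ → ℝ, mixedNorm (2*a) (2*b) w
      = (∫⁻ t, inn (2*b) w t ^ (a/b)) ^ (1/(2*a) : ℝ) := by
    intro w
    rw [mixedNorm_eq]
    congr 2
    ext t
    congr 1
    rw [mul_div_mul_left _ _ (by norm_num : (2:ℝ) ≠ 0)]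
  rw [mixedNorm_eq, key, key]
  calc (∫⁻ t, inn b (fun z => u z * v z) t ^ (a/b)) ^ (1/a)
      ≤ ((∫⁻ t, inn (2*b) u t ^ (a/b)) ^ (1/2:ℝ) * (∫⁻ t, inn (2*b) v t ^ (a/b)) ^ (1/2:ℝ)) ^ (1/a) :=
        ENNReal.rpow_le_rpow step2 (by positivity)
    _ = _ := by
        rw [ENNReal.mul_rpow_of_nonneg _ _ (by positivity : (0:ℝ) ≤ 1/a),
          ← ENNReal.rpow_mul, ← ENNReal.rpow_mul]
        congr 2 <;> field_simp <;> ring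

lemma lintegral_smul_cov (g : E3 → ℝ≥0∞) (hg : Measurable g) {r : ℝ} (hr : 0 < r) :
    ∫⁻ x, g (r⁻¹ • x) = ENNReal.ofReal (r ^ (3:ℕ)) * ∫⁻ x, g x := by
  have h1 : ∫⁻ x, g (r⁻¹ • x) = ∫⁻ x, g x ∂(Measure.map (r⁻¹ • ·) volume) :=
    (lintegral_map hg (measurable_const_smul _)).symm
  rw [h1, Measure.map_addHaar_smul volume (inv_ne_zero hr.ne'), lintegral_smul_measure]
  congr 1
  rw [finrank_euclideanSpace_fin]
  rw [abs_of_pos (by positivity), inv_pow, inv_inv]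

lemma lintegral_time_cov (g : ℝ → ℝ≥0∞) (hg : Measurable g) {r : ℝ} (hr : 0 < r) (t₀ : ℝ) :
    ∫⁻ t, g ((t - t₀) / r) = ENNReal.ofReal r * ∫⁻ t, g t := by
  have h0 : ∀ t : ℝ, (t - t₀) / r = r⁻¹ * (t + -t₀) := by intro t; rw [div_eq_inv_mul]; ring_nf
  simp_rw [h0]
  rw [lintegral_add_right_eq_self (fun t => g (r⁻¹ * t)) (-t₀)]
  have h1 : ∫⁻ t, g (r⁻¹ * t) = ∫⁻ t, g t ∂(Measure.map (r⁻¹ * ·) volume) :=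
    (lintegral_map hg (measurable_const_mul _)).symm
  rw [h1, Real.map_volume_mul_left (inv_ne_zero hr.ne'), lintegral_smul_measure, inv_inv,
    abs_of_pos hr, smul_eq_mul]

lemma mixedNorm_scale {a b : ℝ} (ha : 0 < a) (hb : 0 < b) {U : E3 × ℝ → ℝ}
    (hU : Measurable U) (c : ℝ) {r : ℝ} (hr : 0 < r) (t₀ : ℝ) :
    mixedNorm a b (fun z => c * U (r⁻¹ • z.1, (z.2 - t₀) / r))
      = ENNReal.ofReal |c| * ENNReal.ofReal (r ^ (3/b + 1/a)) * mixedNorm a b U := by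
  have hUm : Measurable fun z : E3 × ℝ => ENNReal.ofReal |U z| ^ b :=
    (ENNReal.measurable_ofReal.comp hU.abs).pow_const _
  have step1 : ∀ t, inn b (fun z => c * U (r⁻¹ • z.1, (z.2 - t₀) / r)) t
      = ENNReal.ofReal |c| ^ b * ENNReal.ofReal (r ^ (3:ℕ)) * inn b U ((t - t₀)/r) := by
    intro t
    unfold inn
    have h1 : ∀ x : E3, ENNReal.ofReal |c * U (r⁻¹ • x, (t - t₀)/r)| ^ b
        = ENNReal.ofReal |c| ^ b * ENNReal.ofReal |U (r⁻¹ • x, (t - t₀)/r)| ^ b := by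
      intro x
      rw [abs_mul, ENNReal.ofReal_mul (abs_nonneg _), ENNReal.mul_rpow_of_nonneg _ _ hb.le]
    simp_rw [h1]
    rw [lintegral_const_mul _ (by
      exact (hUm.comp ((measurable_const_smul _).prodMk measurable_const)))]
    rw [mul_assoc]
    congr 1
    exact lintegral_smul_cov (fun x => ENNReal.ofReal |U (x, (t - t₀)/r)| ^ b)
      (hUm.comp (measurable_id.prodMk measurable_const)) hr
  have hab : (0:ℝ) ≤ a/b := by positivity
  have h1a : (0:ℝ) ≤ 1/a := by positivity
  have hmeas : Measurable fun t : ℝ => inn b U ((t - t₀)/r) ^ (a/b) :=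
    ((measurable_inn hU).pow_const _).comp ((measurable_id.sub measurable_const).div_const r)
  have hpt : ∀ t : ℝ, inn b (fun z => c * U (r⁻¹ • z.1, (z.2 - t₀) / r)) t ^ (a/b)
      = (ENNReal.ofReal |c| ^ b * ENNReal.ofReal (r ^ (3:ℕ))) ^ (a/b)
        * inn b U ((t - t₀)/r) ^ (a/b) := fun t => by
    rw [step1, ENNReal.mul_rpow_of_nonneg _ _ hab]
  have step2 : (∫⁻ t, inn b (fun z => c * U (r⁻¹ • z.1, (z.2 - t₀) / r)) t ^ (a/b))
      = (ENNReal.ofReal |c| ^ b * ENNReal.ofReal (r ^ (3:ℕ))) ^ (a/b) * ENNReal.ofReal r *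
        ∫⁻ t, inn b U t ^ (a/b) := by
    simp_rw [hpt]
    rw [lintegral_const_mul _ hmeas, mul_assoc]
    congr 1
    exact lintegral_time_cov (fun t => inn b U t ^ (a/b)) ((measurable_inn hU).pow_const _) hr t₀
  rw [mixedNorm_eq, step2, mixedNorm_eq]
  set A := ENNReal.ofReal |c| ^ b with hA
  set B := ENNReal.ofReal (r ^ (3:ℕ)) with hB
  set I := ∫⁻ t, inn b U t ^ (a/b) with hI
  have e0 : (a/b) * (1/a) = 1/b := by field_simp
  have eA : A ^ (1/b : ℝ) = ENNReal.ofReal |c| := by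
    rw [hA, ← ENNReal.rpow_mul, mul_one_div, div_self hb.ne', ENNReal.rpow_one]
  have eB : B ^ (1/b : ℝ) = ENNReal.ofReal (r ^ (3/b : ℝ)) := by
    rw [hB, show (r : ℝ) ^ (3:ℕ) = r ^ ((3:ℕ):ℝ) from (Real.rpow_natCast r 3).symm,
      ENNReal.ofReal_rpow_of_pos (Real.rpow_pos_of_pos hr _), ← Real.rpow_mul hr.le]
    congr 1
    push_cast
    ring
  have eR : (ENNReal.ofReal r) ^ (1/a : ℝ) = ENNReal.ofReal (r ^ (1/a : ℝ)) :=
    ENNReal.ofReal_rpow_of_pos hr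
  calc ((A * B) ^ (a/b) * ENNReal.ofReal r * I) ^ (1/a)
      = ((A * B) ^ (a/b)) ^ (1/a : ℝ) * (ENNReal.ofReal r) ^ (1/a : ℝ) * I ^ (1/a) := by
        rw [ENNReal.mul_rpow_of_nonneg _ _ h1a, ENNReal.mul_rpow_of_nonneg _ _ h1a]
    _ = (A * B) ^ ((a/b) * (1/a)) * (ENNReal.ofReal r) ^ (1/a : ℝ) * I ^ (1/a) := by
        rw [ENNReal.rpow_mul]
    _ = A ^ (1/b : ℝ) * B ^ (1/b : ℝ) * (ENNReal.ofReal r) ^ (1/a : ℝ) * I ^ (1/a) := by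
        rw [e0, ENNReal.mul_rpow_of_nonneg _ _ (by positivity : (0:ℝ) ≤ 1/b)]
    _ = ENNReal.ofReal |c| * ENNReal.ofReal (r ^ (3/b + 1/a)) * I ^ (1/a) := by
        rw [eA, eB, eR, Real.rpow_add hr (3/b) (1/a), ENNReal.ofReal_mul (by positivity)]
        ring

/-- residual part of the truncation -/
noncomputable def resid (U : E3 × ℝ → ℝ) (k : ℕ) (z : E3 × ℝ) : ℝ :=
  if |U z| ≤ k ∧ ‖z.1‖ ≤ k ∧ |z.2| ≤ k then 0 else U z

/-- truncated part -/
noncomputable def trunc (U : E3 × ℝ → ℝ) (k : ℕ) (z : E3 × ℝ) : ℝ :=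
  if |U z| ≤ k ∧ ‖z.1‖ ≤ k ∧ |z.2| ≤ k then U z else 0

lemma trunc_add_resid (U : E3 × ℝ → ℝ) (k : ℕ) (z : E3 × ℝ) :
    U z = trunc U k z + resid U k z := by
  unfold trunc resid; split <;> ring

lemma truncSet_meas {U : E3 × ℝ → ℝ} (hU : Measurable U) (k : ℕ) :
    MeasurableSet {z : E3 × ℝ | |U z| ≤ k ∧ ‖z.1‖ ≤ k ∧ |z.2| ≤ k} := by
  refine (measurableSet_le hU.abs measurable_const).inter ?_
  exact (measurableSet_le measurable_fst.norm measurable_const).inter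
    (measurableSet_le measurable_snd.abs measurable_const)

lemma measurable_trunc {U : E3 × ℝ → ℝ} (hU : Measurable U) (k : ℕ) :
    Measurable (trunc U k) := Measurable.ite (truncSet_meas hU k) hU measurable_const

lemma measurable_resid {U : E3 × ℝ → ℝ} (hU : Measurable U) (k : ℕ) :
    Measurable (resid U k) := Measurable.ite (truncSet_meas hU k) measurable_const hU

lemma abs_trunc_le (U : E3 × ℝ → ℝ) (k : ℕ) (z : E3 × ℝ) : |trunc U k z| ≤ |U z| := by
  unfold trunc; split <;> simp [abs_nonneg]

lemma abs_resid_le (U : E3 × ℝ → ℝ) (k : ℕ) (z : E3 × ℝ) : |resid U k z| ≤ |U z| := by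
  unfold resid; split <;> simp [abs_nonneg]

lemma trunc_bound (U : E3 × ℝ → ℝ) (k : ℕ) (z : E3 × ℝ) :
    |trunc U k z| ≤ (k : ℝ) * (Metric.closedBall (0:E3) k).indicator (fun _ => (1:ℝ)) z.1 *
      (Set.Icc (-(k:ℝ)) k).indicator (fun _ => (1:ℝ)) z.2 := by
  unfold trunc
  split
  · rename_i h
    obtain ⟨h1, h2, h3⟩ := h
    rw [Set.indicator_of_mem (by simpa [Metric.mem_closedBall, dist_eq_norm] using h2),
      Set.indicator_of_mem (by rw [Set.mem_Icc]; constructor <;> [linarith [neg_abs_le z.2]; linarith [le_abs_self z.2]])]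
    simpa using h1
  · simp only [abs_zero]
    refine mul_nonneg (mul_nonneg (by positivity) ?_) ?_ <;>
      exact Set.indicator_nonneg (fun _ _ => zero_le_one) _

lemma indicator_one_rpow {α : Type*} (s : Set α) (x : α) {b : ℝ} (hb : 0 < b) :
    (s.indicator (fun _ => (1:ℝ≥0∞)) x) ^ b = s.indicator (fun _ => (1:ℝ≥0∞)) x := by
  by_cases h : x ∈ s <;>
    simp [h, ENNReal.zero_rpow_of_pos hb]

lemma mixedNorm_le_box {a b : ℝ} (ha : 0 < a) (hb : 0 < b) {v : E3 × ℝ → ℝ} {c : ℝ}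
    {A : Set E3} {I : Set ℝ} (hA : MeasurableSet A) (hI : MeasurableSet I)
    (hbd : ∀ z : E3 × ℝ, |v z| ≤ c * A.indicator (fun _ => (1:ℝ)) z.1 *
      I.indicator (fun _ => (1:ℝ)) z.2) :
    mixedNorm a b v ≤ ENNReal.ofReal c * volume A ^ (1/b : ℝ) * volume I ^ (1/a : ℝ) := by
  have hpt : ∀ z : E3 × ℝ, ENNReal.ofReal |v z| ≤ ENNReal.ofReal c *
      A.indicator (fun _ => (1:ℝ≥0∞)) z.1 * I.indicator (fun _ => (1:ℝ≥0∞)) z.2 := by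
    intro z
    by_cases h1 : z.1 ∈ A
    · by_cases h2 : z.2 ∈ I
      · simpa [h1, h2] using ENNReal.ofReal_le_ofReal (by simpa [h1, h2] using hbd z)
      · have := hbd z
        simp [h2] at this
        simp [this, h2]
    · have := hbd z
      simp [h1] at this
      simp [this, h1]
  have step1 : ∀ t, inn b v t ≤ (ENNReal.ofReal c) ^ b * volume A *
      I.indicator (fun _ => (1:ℝ≥0∞)) t := by
    intro t
    calc inn b v t ≤ ∫⁻ x : E3, ((ENNReal.ofReal c) ^ b * A.indicator (fun _ => (1:ℝ≥0∞)) x)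
          * I.indicator (fun _ => (1:ℝ≥0∞)) t := by
          refine lintegral_mono fun x => ?_
          calc ENNReal.ofReal |v (x, t)| ^ b
              ≤ (ENNReal.ofReal c * A.indicator (fun _ => (1:ℝ≥0∞)) x *
                  I.indicator (fun _ => (1:ℝ≥0∞)) t) ^ b :=
                ENNReal.rpow_le_rpow (hpt (x, t)) hb.le
            _ = _ := by
                rw [ENNReal.mul_rpow_of_nonneg _ _ hb.le, ENNReal.mul_rpow_of_nonneg _ _ hb.le,
                  indicator_one_rpow _ _ hb, indicator_one_rpow _ _ hb]
      _ = (ENNReal.ofReal c) ^ b * volume A * I.indicator (fun _ => (1:ℝ≥0∞)) t := by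
          rw [lintegral_mul_const _ ((measurable_const.indicator hA).const_mul _),
            lintegral_const_mul _ (measurable_const.indicator hA),
            lintegral_indicator_const hA, one_mul]
  calc mixedNorm a b v
      ≤ (∫⁻ t, ((ENNReal.ofReal c) ^ b * volume A) ^ (a/b) *
          I.indicator (fun _ => (1:ℝ≥0∞)) t) ^ (1/a) := by
        rw [mixedNorm_eq]
        refine ENNReal.rpow_le_rpow (lintegral_mono fun t => ?_) (by positivity)
        calc inn b v t ^ (a/b) ≤ ((ENNReal.ofReal c) ^ b * volume A *
              I.indicator (fun _ => (1:ℝ≥0∞)) t) ^ (a/b) :=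
            ENNReal.rpow_le_rpow (step1 t) (by positivity)
          _ = _ := by
            rw [ENNReal.mul_rpow_of_nonneg _ _ (by positivity : (0:ℝ) ≤ a/b),
              indicator_one_rpow _ _ (by positivity)]
    _ = (((ENNReal.ofReal c) ^ b * volume A) ^ (a/b) * volume I) ^ (1/a) := by
        rw [lintegral_const_mul _ (measurable_const.indicator hI),
          lintegral_indicator_const hI, one_mul]
    _ = _ := by
        rw [ENNReal.mul_rpow_of_nonneg _ _ (by positivity : (0:ℝ) ≤ 1/a),
          ← ENNReal.rpow_mul, ENNReal.mul_rpow_of_nonneg _ _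
            (by positivity : (0:ℝ) ≤ (a/b) * (1/a)), ← ENNReal.rpow_mul,
          show b * ((a/b) * (1/a)) = 1 by field_simp,
          show (a/b) * (1/a) = 1/b by field_simp, ENNReal.rpow_one]

lemma tendsto_mixedNorm_resid {a b : ℝ} (ha : 0 < a) (hb : 0 < b) {U : E3 × ℝ → ℝ}
    (hU : Measurable U) (hfin : mixedNorm a b U < ⊤) :
    Tendsto (fun k : ℕ => mixedNorm a b (resid U k)) atTop (nhds 0) := by
  have hab : (0:ℝ) < a / b := by positivity
  have hIfin : (∫⁻ t, inn b U t ^ (a/b)) ≠ ⊤ := by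
    intro h
    rw [mixedNorm_eq, h, ENNReal.top_rpow_of_pos (by positivity)] at hfin
    exact (lt_irrefl _ hfin).elim
  have hae : ∀ᵐ t : ℝ, inn b U t ≠ ⊤ := by
    have h1 : ∀ᵐ t : ℝ, inn b U t ^ (a/b) < ⊤ :=
      ae_lt_top ((measurable_inn hU).pow_const _) hIfin
    refine h1.mono fun t ht => ?_
    intro hc
    rw [hc, ENNReal.top_rpow_of_pos hab] at ht
    exact (lt_irrefl _ ht).elim
  -- inner convergence for a.e. t
  have inner_conv : ∀ᵐ t : ℝ, Tendsto (fun k : ℕ => inn b (resid U k) t) atTop (nhds 0) := by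
    refine hae.mono fun t ht => ?_
    have := tendsto_lintegral_of_dominated_convergence
      (F := fun k (x : E3) => ENNReal.ofReal |resid U k (x, t)| ^ b)
      (f := fun _ => 0)
      (bound := fun x => ENNReal.ofReal |U (x, t)| ^ b)
      (fun k => ((ENNReal.measurable_ofReal.comp
        ((measurable_resid hU k).comp (measurable_id.prodMk measurable_const)).abs).pow_const _))
      (fun k => Eventually.of_forall fun x =>
        ENNReal.rpow_le_rpow (ENNReal.ofReal_le_ofReal (abs_resid_le U k (x, t))) hb.le)
      ht
      (Eventually.of_forall fun x => ?_)
    · simpa [inn] using this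
    · -- pointwise: eventually resid = 0
      obtain ⟨N, hN⟩ := exists_nat_ge (max |U (x, t)| (max ‖x‖ |t|))
      refine tendsto_const_nhds.congr' ?_
      filter_upwards [eventually_ge_atTop N] with k hk
      have hcond : |U (x, t)| ≤ (k:ℝ) ∧ ‖x‖ ≤ (k:ℝ) ∧ |t| ≤ (k:ℝ) := by
        have hNk : (N:ℝ) ≤ k := Nat.cast_le.mpr hk
        refine ⟨le_trans (le_trans (le_max_left _ _) hN) hNk,
          le_trans (le_trans (le_trans (le_max_left _ _) (le_max_right _ _)) hN) hNk,
          le_trans (le_trans (le_trans (le_max_right _ _) (le_max_right _ _)) hN) hNk⟩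
      have : resid U k (x, t) = 0 := by unfold resid; rw [if_pos hcond]
      rw [this]
      simp [ENNReal.zero_rpow_of_pos hb]
  -- outer convergence
  have outer_conv : Tendsto (fun k : ℕ => ∫⁻ t, inn b (resid U k) t ^ (a/b)) atTop (nhds 0) := by
    have := tendsto_lintegral_of_dominated_convergence
      (F := fun k t => inn b (resid U k) t ^ (a/b))
      (f := fun _ => 0)
      (bound := fun t => inn b U t ^ (a/b))
      (fun k => (measurable_inn (measurable_resid hU k)).pow_const _)
      (fun k => Eventually.of_forall fun t =>
        ENNReal.rpow_le_rpow (inn_mono hb.le (abs_resid_le U k) t) hab.le)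
      hIfin
      (inner_conv.mono fun t ht => by
        simpa [ENNReal.zero_rpow_of_pos hab] using ht.ennrpow_const (a/b))
    simpa using this
  have := outer_conv.ennrpow_const (1/a)
  rw [ENNReal.zero_rpow_of_pos (by positivity)] at this
  exact this.congr fun k => (mixedNorm_eq a b (resid U k)).symm

lemma prod_min_ratio {l1 l2 : ℝ} (h1 : 0 < l1) (h2 : 0 < l2) :
    (min l1 l2 / l1) * (min l1 l2 / l2) = min (l2 / l1) (l1 / l2) := by
  rcases le_total l1 l2 with h | h
  · rw [min_eq_left h, min_eq_right ((div_le_div_iff₀ h2 h1).mpr (by nlinarith))]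
    field_simp
  · rw [min_eq_right h, min_eq_left ((div_le_div_iff₀ h1 h2).mpr (by nlinarith))]
    field_simp

lemma real_limit_lemma {α K T : ℝ} (hα : 0 < α) (hK : 0 ≤ K) (hT : 0 ≤ T)
    {lam₁ lam₂ t₁ t₂ : ℕ → ℝ} (hl₁ : ∀ n, 0 < lam₁ n) (hl₂ : ∀ n, 0 < lam₂ n)
    (horth : Tendsto
      (fun n => lam₂ n / lam₁ n + lam₁ n / lam₂ n + |t₁ n - t₂ n| / lam₁ n) atTop atTop) :
    Tendsto (fun n => if |t₁ n - t₂ n| ≤ (lam₁ n + lam₂ n) * T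
      then K * (min (lam₂ n / lam₁ n) (lam₁ n / lam₂ n)) ^ α else 0) atTop (nhds 0) := by
  rw [Metric.tendsto_atTop]
  intro ε hε
  set e := (ε / (K + 1)) ^ (1/α : ℝ) with he
  have hepos : 0 < e := Real.rpow_pos_of_pos (by positivity) _
  set δ := min 1 e with hδ
  have hδpos : 0 < δ := lt_min one_pos hepos
  have hδ1 : δ ≤ 1 := min_le_left _ _
  have hKδ : K * δ ^ α < ε := by
    have h1 : δ ^ α ≤ e ^ α := Real.rpow_le_rpow hδpos.le (min_le_right _ _) hα.le
    have h2 : e ^ α = ε / (K + 1) := by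
      rw [he, ← Real.rpow_mul (by positivity), one_div, inv_mul_cancel₀ hα.ne', Real.rpow_one]
    have h3 : K * ε / (K + 1) < ε := (div_lt_iff₀ (by positivity)).mpr (by nlinarith)
    calc K * δ ^ α ≤ K * (ε / (K + 1)) := by rw [← h2]; exact mul_le_mul_of_nonneg_left h1 hK
      _ = K * ε / (K + 1) := by ring
      _ < ε := h3
  obtain ⟨N, hN⟩ := Filter.eventually_atTop.mp ((tendsto_atTop.mp horth) (2/δ + (1 + 1/δ)*T + 1))
  refine ⟨N, fun n hn => ?_⟩
  have hr := hN n hn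
  set l1 := lam₁ n; set l2 := lam₂ n
  have h1 : 0 < l1 := hl₁ n
  have h2 : 0 < l2 := hl₂ n
  set m := min (l2 / l1) (l1 / l2) with hm
  have hmpos : 0 < m := lt_min (by positivity) (by positivity)
  rcases le_or_gt m δ with hmδ | hmδ
  · -- small ratio : bound by K * δ^α
    have hbound : (if |t₁ n - t₂ n| ≤ (l1 + l2) * T then K * m ^ α else 0) < ε := by
      split
      · calc K * m ^ α ≤ K * δ ^ α :=
            mul_le_mul_of_nonneg_left (Real.rpow_le_rpow hmpos.le hmδ hα.le) hK
          _ < ε := hKδ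
      · exact hε
    rw [Real.dist_eq, sub_zero, abs_of_nonneg (by split <;> positivity)]
    exact hbound
  · -- ratios bounded : time separation
    have hmax : l2 / l1 ≤ 1 / δ ∧ l1 / l2 ≤ 1 / δ := by
      have e1 : l2 / l1 = (l1 / l2)⁻¹ := by field_simp
      have e2 : l1 / l2 = (l2 / l1)⁻¹ := by field_simp
      constructor
      · rw [e1, one_div]
        exact inv_anti₀ hδpos (hmδ.le.trans (min_le_right _ _))
      · rw [e2, one_div]
        exact inv_anti₀ hδpos (hmδ.le.trans (min_le_left _ _))
    have hsum : l2 / l1 + l1 / l2 ≤ 2 / δ := by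
      have := hmax.1; have := hmax.2
      have h2δ : 2 / δ = 1/δ + 1/δ := by ring
      linarith
    have hsep : ¬ |t₁ n - t₂ n| ≤ (l1 + l2) * T := by
      intro hcon
      have hc2 : |t₁ n - t₂ n| / l1 ≤ (1 + l2/l1) * T := by
        rw [div_le_iff₀ h1]
        calc |t₁ n - t₂ n| ≤ (l1 + l2) * T := hcon
          _ = (1 + l2/l1) * T * l1 := by field_simp
      have hc3 : (1 + l2/l1) * T ≤ (1 + 1/δ) * T :=
        mul_le_mul_of_nonneg_right (by linarith [hmax.1]) hT
      linarith
    rw [if_neg hsep]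
    simpa using hε


lemma abs_trunc_le_nat (U : E3 × ℝ → ℝ) (k : ℕ) (z : E3 × ℝ) : |trunc U k z| ≤ (k:ℝ) := by
  unfold trunc
  split
  · rename_i h; exact h.1
  · simp

lemma trunc_eq_zero_of_space (U : E3 × ℝ → ℝ) (k : ℕ) {x : E3} (s : ℝ)
    (h : ¬ ‖x‖ ≤ (k:ℝ)) : trunc U k (x, s) = 0 := by
  unfold trunc; rw [if_neg]; tauto

lemma trunc_eq_zero_of_time (U : E3 × ℝ → ℝ) (k : ℕ) (x : E3) {s : ℝ}
    (h : ¬ |s| ≤ (k:ℝ)) : trunc U k (x, s) = 0 := by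
  unfold trunc; rw [if_neg]; tauto

lemma real_box_identity {a b α kk r₁ r₂ w : ℝ} (ha : 0 < a) (hb : 0 < b) (hα : 0 < α)
    (id2 : 3/b + 1/a = 2*α) (hk : 0 < kk) (h1 : 0 < r₁) (h2 : 0 < r₂) (hw : 0 ≤ w) :
    ((r₁ ^ (-α) * kk) * (r₂ ^ (-α) * kk)) * ((min r₁ r₂ * kk) ^ (3:ℕ)) ^ (1/b : ℝ) * w *
      (2 * min r₁ r₂ * kk) ^ (1/a : ℝ)
    = (kk^2 * (kk ^ (3:ℕ)) ^ (1/b : ℝ) * (2*kk) ^ (1/a : ℝ) * w) *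
        (min (r₂/r₁) (r₁/r₂)) ^ α := by
  set m := min r₁ r₂ with hmdef
  have hm : 0 < m := lt_min h1 h2
  have em : ((m * kk) ^ (3:ℕ)) ^ (1/b : ℝ) = m ^ (3/b : ℝ) * ((kk:ℝ) ^ (3:ℕ)) ^ (1/b : ℝ) := by
    rw [mul_pow, Real.mul_rpow (by positivity) (by positivity)]
    congr 1
    rw [← Real.rpow_natCast m 3, ← Real.rpow_mul hm.le]
    norm_num [div_eq_mul_inv]
  have e2 : (2 * m * kk) ^ (1/a : ℝ) = m ^ (1/a : ℝ) * (2*kk) ^ (1/a : ℝ) := by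
    rw [show 2*m*kk = m*(2*kk) by ring, Real.mul_rpow hm.le (by positivity)]
  have e3 : m ^ (3/b : ℝ) * m ^ (1/a : ℝ) = m ^ α * m ^ α := by
    rw [← Real.rpow_add hm, ← Real.rpow_add hm, id2, two_mul]
  have e4 : r₁ ^ (-α) * m ^ α = (m / r₁) ^ α := by
    rw [Real.div_rpow hm.le h1.le, Real.rpow_neg h1.le]; ring
  have e5 : r₂ ^ (-α) * m ^ α = (m / r₂) ^ α := by
    rw [Real.div_rpow hm.le h2.le, Real.rpow_neg h2.le]; ring
  calc ((r₁ ^ (-α) * kk) * (r₂ ^ (-α) * kk)) * ((m * kk) ^ (3:ℕ)) ^ (1/b : ℝ) * w *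
      (2 * m * kk) ^ (1/a : ℝ)
      = (r₁ ^ (-α) * r₂ ^ (-α)) * (m ^ (3/b:ℝ) * m ^ (1/a:ℝ)) *
        (kk * kk * ((kk:ℝ) ^ (3:ℕ)) ^ (1/b:ℝ) * (2*kk) ^ (1/a:ℝ) * w) := by
        rw [em, e2]; ring
    _ = (r₁ ^ (-α) * m ^ α) * (r₂ ^ (-α) * m ^ α) *
        (kk * kk * ((kk:ℝ) ^ (3:ℕ)) ^ (1/b:ℝ) * (2*kk) ^ (1/a:ℝ) * w) := by
        rw [e3]; ring
    _ = ((m / r₁) ^ α * (m / r₂) ^ α) *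
        (kk * kk * ((kk:ℝ) ^ (3:ℕ)) ^ (1/b:ℝ) * (2*kk) ^ (1/a:ℝ) * w) := by
        rw [e4, e5]
    _ = ((m / r₁) * (m / r₂)) ^ α *
        (kk * kk * ((kk:ℝ) ^ (3:ℕ)) ^ (1/b:ℝ) * (2*kk) ^ (1/a:ℝ) * w) := by
        rw [← Real.mul_rpow (by positivity) (by positivity)]
    _ = _ := by
        rw [hmdef, prod_min_ratio h1 h2]; ring

lemma phi_tendsto {a b α : ℝ} (ha : 0 < a) (hb : 0 < b) (hα : 0 < α)
    (id2 : 3/b + 1/a = 2*α)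
    (U₁ U₂ : E3 × ℝ → ℝ)
    {lam₁ lam₂ t₁ t₂ : ℕ → ℝ} (hl₁ : ∀ n, 0 < lam₁ n) (hl₂ : ∀ n, 0 < lam₂ n)
    (horth : Tendsto
      (fun n => lam₂ n / lam₁ n + lam₁ n / lam₂ n + |t₁ n - t₂ n| / lam₁ n) atTop atTop)
    (k : ℕ) (hk1 : 1 ≤ k) :
    Tendsto (fun n => mixedNorm a b (fun z =>
      ((lam₁ n) ^ (-α) * trunc U₁ k ((lam₁ n)⁻¹ • z.1, (z.2 - t₁ n) / lam₁ n)) *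
      ((lam₂ n) ^ (-α) * trunc U₂ k ((lam₂ n)⁻¹ • z.1, (z.2 - t₂ n) / lam₂ n))))
      atTop (nhds 0) := by
  have hkpos : (0:ℝ) < (k:ℝ) := by exact_mod_cast hk1
  set V₀ := volume (Metric.ball (0:E3) 1) with hV₀def
  have hV₀ : V₀ ≠ ⊤ := measure_ball_lt_top.ne
  have hV₀b : V₀ ^ (1/b : ℝ) ≠ ⊤ :=
    (ENNReal.rpow_lt_top_of_nonneg (by positivity) hV₀).ne
  set w := (V₀ ^ (1/b : ℝ)).toReal with hwdef
  have hw : V₀ ^ (1/b : ℝ) = ENNReal.ofReal w := (ENNReal.ofReal_toReal hV₀b).symm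
  have hw0 : 0 ≤ w := ENNReal.toReal_nonneg
  set K := (k:ℝ)^2 * ((k:ℝ) ^ (3:ℕ)) ^ (1/b : ℝ) * (2*(k:ℝ)) ^ (1/a : ℝ) * w with hKdef
  have hK : 0 ≤ K := by positivity
  have upper := ENNReal.tendsto_ofReal
    (real_limit_lemma hα hK (le_of_lt hkpos) hl₁ hl₂ horth)
  rw [ENNReal.ofReal_zero] at upper
  refine tendsto_of_tendsto_of_tendsto_of_le_of_le tendsto_const_nhds upper
    (fun n => zero_le) (fun n => ?_)
  -- per n bound
  set r₁ := lam₁ n with hr₁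
  set r₂ := lam₂ n with hr₂
  have h1 : 0 < r₁ := hl₁ n
  have h2 : 0 < r₂ := hl₂ n
  set m := min r₁ r₂ with hmdef
  have hm : 0 < m := lt_min h1 h2
  set c := (r₁ ^ (-α) * (k:ℝ)) * (r₂ ^ (-α) * (k:ℝ)) with hcdef
  have hc : 0 ≤ c := by positivity
  set A := Metric.closedBall (0:E3) (m * k) with hAdef
  set I := Set.Icc (t₁ n - r₁ * k) (t₁ n + r₁ * k) ∩
    Set.Icc (t₂ n - r₂ * k) (t₂ n + r₂ * k) with hIdef
  have hbd : ∀ z : E3 × ℝ,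
      |((r₁) ^ (-α) * trunc U₁ k ((r₁)⁻¹ • z.1, (z.2 - t₁ n) / r₁)) *
        ((r₂) ^ (-α) * trunc U₂ k ((r₂)⁻¹ • z.1, (z.2 - t₂ n) / r₂))|
      ≤ c * A.indicator (fun _ => (1:ℝ)) z.1 * I.indicator (fun _ => (1:ℝ)) z.2 := by
    intro z
    have rhs_nonneg : 0 ≤ c * A.indicator (fun _ => (1:ℝ)) z.1 *
        I.indicator (fun _ => (1:ℝ)) z.2 :=
      mul_nonneg (mul_nonneg hc (Set.indicator_nonneg (fun _ _ => zero_le_one) _))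
        (Set.indicator_nonneg (fun _ _ => zero_le_one) _)
    by_cases hz1 : z.1 ∈ A
    · by_cases hz2 : z.2 ∈ I
      · rw [Set.indicator_of_mem hz1, Set.indicator_of_mem hz2, mul_one, mul_one, abs_mul]
        rw [hcdef]
        refine mul_le_mul ?_ ?_ (abs_nonneg _) (by positivity)
        · rw [abs_mul, abs_of_pos (Real.rpow_pos_of_pos h1 _)]
          exact mul_le_mul_of_nonneg_left (abs_trunc_le_nat _ _ _)
            (Real.rpow_pos_of_pos h1 _).le
        · rw [abs_mul, abs_of_pos (Real.rpow_pos_of_pos h2 _)]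
          exact mul_le_mul_of_nonneg_left (abs_trunc_le_nat _ _ _)
            (Real.rpow_pos_of_pos h2 _).le
      · -- time separation : one trunc factor vanishes
        have hz2' : z.2 ∉ Set.Icc (t₁ n - r₁ * k) (t₁ n + r₁ * k) ∨
            z.2 ∉ Set.Icc (t₂ n - r₂ * k) (t₂ n + r₂ * k) := by
          by_contra hcon
          push_neg at hcon
          exact hz2 ⟨hcon.1, hcon.2⟩
        rcases hz2' with h | h
        · have : ¬ |(z.2 - t₁ n) / r₁| ≤ (k:ℝ) := by
            intro habs
            apply h
            rw [abs_div, abs_of_pos h1, div_le_iff₀ h1] at habs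
            have := abs_le.mp habs
            rw [Set.mem_Icc]
            constructor <;> linarith [this.1, this.2]
          rw [trunc_eq_zero_of_time _ _ _ this]
          simpa using rhs_nonneg
        · have : ¬ |(z.2 - t₂ n) / r₂| ≤ (k:ℝ) := by
            intro habs
            apply h
            rw [abs_div, abs_of_pos h2, div_le_iff₀ h2] at habs
            have := abs_le.mp habs
            rw [Set.mem_Icc]
            constructor <;> linarith [this.1, this.2]
          rw [trunc_eq_zero_of_time _ _ _ this]
          simpa using rhs_nonneg
    · -- space separation
      have hz1' : m * k < ‖z.1‖ := by
        by_contra hcon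
        push_neg at hcon
        exact hz1 (mem_closedBall_zero_iff.mpr hcon)
      rcases min_cases r₁ r₂ with ⟨hmeq, -⟩ | ⟨hmeq, -⟩
      · have : ¬ ‖(r₁)⁻¹ • z.1‖ ≤ (k:ℝ) := by
          rw [norm_smul, norm_inv, Real.norm_eq_abs, abs_of_pos h1, not_le]
          rw [inv_mul_eq_div, lt_div_iff₀ h1]
          rw [hmdef, hmeq] at hz1'
          linarith
        rw [trunc_eq_zero_of_space _ _ _ this]
        simpa using rhs_nonneg
      · have : ¬ ‖(r₂)⁻¹ • z.1‖ ≤ (k:ℝ) := by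
          rw [norm_smul, norm_inv, Real.norm_eq_abs, abs_of_pos h2, not_le]
          rw [inv_mul_eq_div, lt_div_iff₀ h2]
          rw [hmdef, hmeq] at hz1'
          linarith
        rw [trunc_eq_zero_of_space _ _ _ this]
        simpa using rhs_nonneg
  have hbox := mixedNorm_le_box ha hb (Metric.isClosed_closedBall.measurableSet)
    (measurableSet_Icc.inter measurableSet_Icc) hbd
  refine hbox.trans ?_
  by_cases hsep : |t₁ n - t₂ n| ≤ (r₁ + r₂) * (k:ℝ)
  · rw [if_pos hsep]
    have hvolA : volume A = ENNReal.ofReal ((m * k) ^ (3:ℕ)) * V₀ := by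
      rw [hAdef, Measure.addHaar_closedBall volume 0 (by positivity : (0:ℝ) ≤ m * k),
        finrank_euclideanSpace_fin]
    have hvolI : volume I ≤ ENNReal.ofReal (2 * m * k) := by
      rcases le_total r₁ r₂ with hle | hle
      · calc volume I ≤ volume (Set.Icc (t₁ n - r₁ * k) (t₁ n + r₁ * k)) :=
            measure_mono Set.inter_subset_left
          _ = ENNReal.ofReal (2 * m * k) := by
            rw [Real.volume_Icc, hmdef, min_eq_left hle]
            congr 1; ring
      · calc volume I ≤ volume (Set.Icc (t₂ n - r₂ * k) (t₂ n + r₂ * k)) :=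
            measure_mono Set.inter_subset_right
          _ = ENNReal.ofReal (2 * m * k) := by
            rw [Real.volume_Icc, hmdef, min_eq_right hle]
            congr 1; ring
    calc ENNReal.ofReal c * volume A ^ (1/b:ℝ) * volume I ^ (1/a:ℝ)
        ≤ ENNReal.ofReal c * volume A ^ (1/b:ℝ) * (ENNReal.ofReal (2 * m * k)) ^ (1/a:ℝ) := by
          gcongr
        _ = ENNReal.ofReal (c * ((m * k) ^ (3:ℕ)) ^ (1/b:ℝ) * w * (2 * m * k) ^ (1/a:ℝ)) := by
          rw [hvolA, ENNReal.mul_rpow_of_nonneg _ _ (by positivity : (0:ℝ) ≤ 1/b), hw,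
            ENNReal.ofReal_rpow_of_pos (by positivity),
            ENNReal.ofReal_rpow_of_pos (by positivity),
            ← ENNReal.ofReal_mul (by positivity), ← ENNReal.ofReal_mul (by positivity),
            ← ENNReal.ofReal_mul (by positivity)]
          congr 1
          ring
        _ = ENNReal.ofReal (K * (min (r₂/r₁) (r₁/r₂)) ^ α) := by
          rw [hcdef, real_box_identity ha hb hα id2 hkpos h1 h2 hw0, hKdef]
  · rw [if_neg hsep]
    have hIempty : I = ∅ := by
      rw [hIdef, Set.eq_empty_iff_forall_notMem]
      rintro s ⟨hs1, hs2⟩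
      rw [Set.mem_Icc] at hs1 hs2
      apply hsep
      calc |t₁ n - t₂ n| ≤ |t₁ n - s| + |s - t₂ n| := abs_sub_le _ _ _
        _ ≤ r₁ * k + r₂ * k := by
          refine add_le_add (abs_le.mpr ⟨by linarith [hs1.1, hs1.2], by linarith [hs1.1, hs1.2]⟩)
            (abs_le.mpr ⟨by linarith [hs2.1, hs2.2], by linarith [hs2.1, hs2.2]⟩)
        _ = (r₁ + r₂) * k := by ring
    have hvol0 : volume (Set.Icc (t₁ n - r₁ * k) (t₁ n + r₁ * k) ∩
        Set.Icc (t₂ n - r₂ * k) (t₂ n + r₂ * k)) = 0 := by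
      rw [← hIdef, hIempty, measure_empty]
    rw [hvol0, ENNReal.zero_rpow_of_pos (by positivity), mul_zero]
    simp

end Helpers

/-- decoupling of almost orthogonal rescaled profiles.  If two
profiles have finite `L^{2p/(1+s_p)}_t L^{2p/(2-s_p)}_x` norm and the parameter
sequences are almost orthogonal, then the mixed
`L^{p/(1+s_p)}_t L^{p/(2-s_p)}_x` norm of the product of their rescalings
tends to `0`. -/
theorem product_of_profiles_vanishes (p sp : ℝ) (hp : 3 < p) (hp5 : p < 5)
    (hsp : sp = 3 / 2 - 2 / (p - 1))
    (U₁ U₂ : EuclideanSpace ℝ (Fin 3) × ℝ → ℝ)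
    (hU₁m : Measurable U₁) (hU₂m : Measurable U₂)
    (hU₁ : mixedNorm (2 * p / (1 + sp)) (2 * p / (2 - sp)) U₁ < ⊤)
    (hU₂ : mixedNorm (2 * p / (1 + sp)) (2 * p / (2 - sp)) U₂ < ⊤)
    (lam₁ lam₂ t₁ t₂ : ℕ → ℝ)
    (hlam₁ : ∀ n, 0 < lam₁ n) (hlam₂ : ∀ n, 0 < lam₂ n)
    (horth : Tendsto
      (fun n => lam₂ n / lam₁ n + lam₁ n / lam₂ n + |t₁ n - t₂ n| / lam₁ n)
      atTop atTop) :
    Tendsto (fun n => mixedNorm (p / (1 + sp)) (p / (2 - sp))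
      (fun z =>
        ((lam₁ n) ^ (-(3 / 2 - sp)) *
            U₁ ((lam₁ n)⁻¹ • z.1, (z.2 - t₁ n) / lam₁ n)) *
        ((lam₂ n) ^ (-(3 / 2 - sp)) *
            U₂ ((lam₂ n)⁻¹ • z.1, (z.2 - t₂ n) / lam₂ n))))
      atTop (nhds 0) := by
  -- basic numerology
  have hp0 : (0:ℝ) < p := by linarith
  have hp1 : (0:ℝ) < p - 1 := by linarith
  have hd1 : 2 / (p - 1) < 1 := by rw [div_lt_one hp1]; linarith
  have hd2 : 1/2 < 2 / (p - 1) := by rw [lt_div_iff₀ hp1]; linarith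
  have hsp1 : sp < 1 := by rw [hsp]; linarith
  have hsp2 : 1/2 < sp := by rw [hsp]; linarith
  have h1sp : (0:ℝ) < 1 + sp := by linarith
  have h2sp : (0:ℝ) < 2 - sp := by linarith
  set a := p / (1 + sp) with ha_def
  set b := p / (2 - sp) with hb_def
  have ha : 0 < a := div_pos hp0 h1sp
  have hb : 0 < b := div_pos hp0 h2sp
  set α := 3 / 2 - sp with hα_def
  have hαpos : 0 < α := by rw [hα_def]; linarith
  have key : p * (3 - 2*sp) = 7 - 2*sp := by rw [hsp]; field_simp; ring
  have ea : 1/a = (1 + sp) / p := by rw [ha_def, one_div_div]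
  have eb : 3/b = 3 * (2 - sp) / p := by rw [hb_def, div_div_eq_mul_div]
  have id2 : 3/b + 1/a = 2*α := by
    rw [ea, eb, hα_def, ← add_div, div_eq_iff hp0.ne']
    linear_combination -key
  have id1 : 3/(2*b) + 1/(2*a) = α := by
    have e1 : 3/(2*b) = (3/b)/2 := by rw [div_div]; ring_nf
    have e2 : 1/(2*a) = (1/a)/2 := by rw [div_div]; ring_nf
    rw [e1, e2, ← add_div, id2]
    ring
  have h2a : 2 * p / (1 + sp) = 2 * a := by rw [ha_def, mul_div_assoc]
  have h2b : 2 * p / (2 - sp) = 2 * b := by rw [hb_def, mul_div_assoc]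
  rw [h2a, h2b] at hU₁ hU₂
  have h2a' : (0:ℝ) < 2 * a := by positivity
  have h2b' : (0:ℝ) < 2 * b := by positivity
  -- scaling invariance of the (2a, 2b) norm
  have hinv : ∀ (U : E3 × ℝ → ℝ), Measurable U → ∀ (r t₀ : ℝ), 0 < r →
      mixedNorm (2*a) (2*b) (fun z => r ^ (-α) * U (r⁻¹ • z.1, (z.2 - t₀) / r))
        = mixedNorm (2*a) (2*b) U := by
    intro U hU r t₀ hr
    rw [mixedNorm_scale h2a' h2b' hU (r ^ (-α)) hr t₀]
    rw [abs_of_pos (Real.rpow_pos_of_pos hr _)]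
    rw [show 3/(2*b) + 1/(2*a) = α from id1]
    rw [← ENNReal.ofReal_mul (by positivity), ← Real.rpow_add hr, neg_add_cancel,
      Real.rpow_zero, ENNReal.ofReal_one, one_mul]
  -- measurability of scaled compositions
  have hcomp : ∀ (r t₀ : ℝ) (U : E3 × ℝ → ℝ), Measurable U →
      Measurable (fun z : E3 × ℝ => r ^ (-α) * U (r⁻¹ • z.1, (z.2 - t₀) / r)) := by
    intro r t₀ U hU
    exact (hU.comp (((measurable_const_smul _).comp measurable_fst).prodMk
      ((measurable_snd.sub measurable_const).div_const _))).const_mul _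
  set M₁ := mixedNorm (2*a) (2*b) U₁ with hM₁
  set M₂ := mixedNorm (2*a) (2*b) U₂ with hM₂
  set C := (3:ℝ≥0∞) ^ (1 + 1/b + 1/a) with hC
  have hCne : C ≠ ⊤ := by
    rw [hC]
    exact (ENNReal.rpow_lt_top_of_nonneg (by positivity)
      (by norm_num : (3:ℝ≥0∞) ≠ ⊤)).ne
  -- the fundamental estimate, for every n and k
  have main_est : ∀ (n : ℕ) (k : ℕ),
      mixedNorm a b (fun z =>
        ((lam₁ n) ^ (-α) * U₁ ((lam₁ n)⁻¹ • z.1, (z.2 - t₁ n) / lam₁ n)) *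
        ((lam₂ n) ^ (-α) * U₂ ((lam₂ n)⁻¹ • z.1, (z.2 - t₂ n) / lam₂ n)))
      ≤ C * (mixedNorm (2*a) (2*b) (resid U₁ k) * M₂
          + M₁ * mixedNorm (2*a) (2*b) (resid U₂ k)
          + mixedNorm a b (fun z =>
              ((lam₁ n) ^ (-α) * trunc U₁ k ((lam₁ n)⁻¹ • z.1, (z.2 - t₁ n) / lam₁ n)) *
              ((lam₂ n) ^ (-α) * trunc U₂ k ((lam₂ n)⁻¹ • z.1, (z.2 - t₂ n) / lam₂ n)))) := by
    intro n k
    set r₁ := lam₁ n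
    set r₂ := lam₂ n
    have h1 : 0 < r₁ := hlam₁ n
    have h2 : 0 < r₂ := hlam₂ n
    set y₁ : E3 × ℝ → E3 × ℝ := fun z => (r₁⁻¹ • z.1, (z.2 - t₁ n) / r₁) with hy₁
    set y₂ : E3 × ℝ → E3 × ℝ := fun z => (r₂⁻¹ • z.1, (z.2 - t₂ n) / r₂) with hy₂
    have hdecomp : ∀ z : E3 × ℝ,
        (r₁ ^ (-α) * U₁ (y₁ z)) * (r₂ ^ (-α) * U₂ (y₂ z))
        = (r₁ ^ (-α) * resid U₁ k (y₁ z)) * (r₂ ^ (-α) * U₂ (y₂ z))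
          + (r₁ ^ (-α) * trunc U₁ k (y₁ z)) * (r₂ ^ (-α) * resid U₂ k (y₂ z))
          + (r₁ ^ (-α) * trunc U₁ k (y₁ z)) * (r₂ ^ (-α) * trunc U₂ k (y₂ z)) := by
      intro z
      have e1 := trunc_add_resid U₁ k (y₁ z)
      have e2 := trunc_add_resid U₂ k (y₂ z)
      rw [e1, e2]
      ring
    have hle : ∀ z : E3 × ℝ,
        |(r₁ ^ (-α) * U₁ (y₁ z)) * (r₂ ^ (-α) * U₂ (y₂ z))|
        ≤ |(r₁ ^ (-α) * resid U₁ k (y₁ z)) * (r₂ ^ (-α) * U₂ (y₂ z))|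
          + |(r₁ ^ (-α) * trunc U₁ k (y₁ z)) * (r₂ ^ (-α) * resid U₂ k (y₂ z))|
          + |(r₁ ^ (-α) * trunc U₁ k (y₁ z)) * (r₂ ^ (-α) * trunc U₂ k (y₂ z))| := by
      intro z
      rw [hdecomp z]
      exact abs_add_three _ _ _
    have hm1 : Measurable (fun z : E3 × ℝ =>
        (r₁ ^ (-α) * resid U₁ k (y₁ z)) * (r₂ ^ (-α) * U₂ (y₂ z))) :=
      (hcomp r₁ (t₁ n) _ (measurable_resid hU₁m k)).mul (hcomp r₂ (t₂ n) _ hU₂m)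
    have hm2 : Measurable (fun z : E3 × ℝ =>
        (r₁ ^ (-α) * trunc U₁ k (y₁ z)) * (r₂ ^ (-α) * resid U₂ k (y₂ z))) :=
      (hcomp r₁ (t₁ n) _ (measurable_trunc hU₁m k)).mul
        (hcomp r₂ (t₂ n) _ (measurable_resid hU₂m k))
    have hm3 : Measurable (fun z : E3 × ℝ =>
        (r₁ ^ (-α) * trunc U₁ k (y₁ z)) * (r₂ ^ (-α) * trunc U₂ k (y₂ z))) :=
      (hcomp r₁ (t₁ n) _ (measurable_trunc hU₁m k)).mul
        (hcomp r₂ (t₂ n) _ (measurable_trunc hU₂m k))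
    refine (mixedNorm_le_add3 ha hb hm1 hm2 hm3 hle).trans ?_
    rw [← hC]
    gcongr C * (?_ + ?_ + ?_)
    · -- Hölder on the first term
      refine (mixedNorm_mul_le ha hb (hcomp r₁ (t₁ n) _ (measurable_resid hU₁m k))
        (hcomp r₂ (t₂ n) _ hU₂m)).trans ?_
      rw [hinv _ (measurable_resid hU₁m k) r₁ (t₁ n) h1, hinv _ hU₂m r₂ (t₂ n) h2]
    · refine (mixedNorm_mul_le ha hb (hcomp r₁ (t₁ n) _ (measurable_trunc hU₁m k))
        (hcomp r₂ (t₂ n) _ (measurable_resid hU₂m k))).trans ?_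
      rw [hinv _ (measurable_trunc hU₁m k) r₁ (t₁ n) h1,
        hinv _ (measurable_resid hU₂m k) r₂ (t₂ n) h2]
      exact mul_le_mul_left (mixedNorm_mono h2a'.le h2b'.le (abs_trunc_le U₁ k)) _
    · exact le_rfl
  -- finiteness
  have hM₁ne : M₁ ≠ ⊤ := hU₁.ne
  have hM₂ne : M₂ ≠ ⊤ := hU₂.ne
  -- residual norms tend to zero
  have hres₁ := tendsto_mixedNorm_resid h2a' h2b' hU₁m hU₁
  have hres₂ := tendsto_mixedNorm_resid h2a' h2b' hU₂m hU₂
  -- final epsilon argument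
  rw [ENNReal.tendsto_nhds_zero]
  intro ε hε
  have hhalf : (0:ℝ≥0∞) < ε / 2 := ENNReal.half_pos hε.ne'
  -- choose k
  have hcross : Tendsto (fun k : ℕ => C * (mixedNorm (2*a) (2*b) (resid U₁ k) * M₂
      + M₁ * mixedNorm (2*a) (2*b) (resid U₂ k))) atTop (nhds 0) := by
    have t1 : Tendsto (fun k : ℕ => mixedNorm (2*a) (2*b) (resid U₁ k) * M₂) atTop (nhds 0) := by
      have := ENNReal.Tendsto.mul_const hres₁ (Or.inr hM₂ne)
      simpa using this
    have t2 : Tendsto (fun k : ℕ => M₁ * mixedNorm (2*a) (2*b) (resid U₂ k)) atTop (nhds 0) := by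
      have := ENNReal.Tendsto.const_mul hres₂ (Or.inr hM₁ne)
      simpa using this
    have t3 := t1.add t2
    rw [add_zero] at t3
    have := ENNReal.Tendsto.const_mul t3 (Or.inr hCne)
    simpa using this
  obtain ⟨k, hk1, hk2⟩ : ∃ k : ℕ, 1 ≤ k ∧ C * (mixedNorm (2*a) (2*b) (resid U₁ k) * M₂
      + M₁ * mixedNorm (2*a) (2*b) (resid U₂ k)) ≤ ε / 2 := by
    have h1 := (ENNReal.tendsto_nhds_zero.mp hcross) (ε/2) hhalf
    obtain ⟨N, hN⟩ := Filter.eventually_atTop.mp h1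
    exact ⟨max N 1, le_max_right _ _, hN _ (le_max_left _ _)⟩
  -- with k fixed, the compact term tends to zero
  have hphi := phi_tendsto ha hb hαpos id2 U₁ U₂ hlam₁ hlam₂ horth k hk1
  have hphiC : Tendsto (fun n => C * mixedNorm a b (fun z =>
      ((lam₁ n) ^ (-α) * trunc U₁ k ((lam₁ n)⁻¹ • z.1, (z.2 - t₁ n) / lam₁ n)) *
      ((lam₂ n) ^ (-α) * trunc U₂ k ((lam₂ n)⁻¹ • z.1, (z.2 - t₂ n) / lam₂ n))))
      atTop (nhds 0) := by
    have := ENNReal.Tendsto.const_mul hphi (Or.inr hCne)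
    simpa using this
  filter_upwards [(ENNReal.tendsto_nhds_zero.mp hphiC) (ε/2) hhalf] with n hn
  calc mixedNorm a b (fun z =>
        ((lam₁ n) ^ (-α) * U₁ ((lam₁ n)⁻¹ • z.1, (z.2 - t₁ n) / lam₁ n)) *
        ((lam₂ n) ^ (-α) * U₂ ((lam₂ n)⁻¹ • z.1, (z.2 - t₂ n) / lam₂ n)))
      ≤ C * (mixedNorm (2*a) (2*b) (resid U₁ k) * M₂
          + M₁ * mixedNorm (2*a) (2*b) (resid U₂ k)
          + mixedNorm a b (fun z =>
              ((lam₁ n) ^ (-α) * trunc U₁ k ((lam₁ n)⁻¹ • z.1, (z.2 - t₁ n) / lam₁ n)) *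
              ((lam₂ n) ^ (-α) * trunc U₂ k ((lam₂ n)⁻¹ • z.1, (z.2 - t₂ n) / lam₂ n)))) :=
        main_est n k
    _ = C * (mixedNorm (2*a) (2*b) (resid U₁ k) * M₂
          + M₁ * mixedNorm (2*a) (2*b) (resid U₂ k))
        + C * mixedNorm a b (fun z =>
            ((lam₁ n) ^ (-α) * trunc U₁ k ((lam₁ n)⁻¹ • z.1, (z.2 - t₁ n) / lam₁ n)) *
            ((lam₂ n) ^ (-α) * trunc U₂ k ((lam₂ n)⁻¹ • z.1, (z.2 - t₂ n) / lam₂ n))) := by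
        rw [mul_add]
    _ ≤ ε / 2 + ε / 2 := add_le_add hk2 hn
    _ = ε := ENNReal.add_halves ε
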